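/- If a[id] is well-formed in λυ′ (more generally, if a[⇑ⁿ id] is well-formed for n ≥ 0), then a[id] (resp. a[⇑ⁿ id]) and a have a common υ′-reduct. -/

import Mathlib

abbrev Var := ℕ

mutual
/-- Terms of the calculus λυ′: named variables, De Bruijn index 1,
application, abstraction, and explicit substitution `a[s]`. -/
inductive UTm : Type
  | fvar : Var → UTm
  | one : UTm
  | app : UTm → UTm → UTm
  | lam : UTm → UTm
  | sub : UTm → USb → UTm
/-- Substitutions of λυ′: `b/`, `↑`, `id`, `⇑s`. -/
inductive USb : Type
  | slash : UTm → USb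
  | up : USb
  | id : USb
  | lift : USb → USb
end

mutual
/-- One-step υ′-reduction (λυ′ without Beta), closed under compatible contexts. -/
inductive UStep : UTm → UTm → Prop
  | app {a b s} : UStep (.sub (.app a b) s) (.app (.sub a s) (.sub b s))
  | lam {a s} : UStep (.sub (.lam a) s) (.lam (.sub a (.lift s)))
  | var {b} : UStep (.sub .one (.slash b)) b
  | shift {a b} : UStep (.sub (.sub a .up) (.slash b)) a
  | varId : UStep (.sub .one .id) .one
  | shiftId {a} : UStep (.sub (.sub a .up) .id) (.sub a .up)
  | varLift {s} : UStep (.sub .one (.lift s)) .one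
  | shiftLift {a s} : UStep (.sub (.sub a .up) (.lift s)) (.sub (.sub a s) .up)
  | appL {a a' b} : UStep a a' → UStep (.app a b) (.app a' b)
  | appR {a b b'} : UStep b b' → UStep (.app a b) (.app a b')
  | lamC {a a'} : UStep a a' → UStep (.lam a) (.lam a')
  | subL {a a' s} : UStep a a' → UStep (.sub a s) (.sub a' s)
  | subR {a : UTm} {s s'} : USStep s s' → UStep (.sub a s) (.sub a s')
/-- One-step υ′-reduction inside substitutions. -/
inductive USStep : USb → USb → Prop
  | slash {b b'} : UStep b b' → USStep (.slash b) (.slash b')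
  | lift {s s' : USb} : USStep s s' → USStep (.lift s) (.lift s')
end

mutual
/-- The typing judgement `n ⊢ a` of λυ′. -/
inductive UJ : ℕ → UTm → Prop
  | fvar (x : Var) : UJ 0 (.fvar x)
  | one (n : ℕ) : UJ (n + 1) .one
  | app {n a b} : UJ n a → UJ n b → UJ n (.app a b)
  | lam {n a} : UJ (n + 1) a → UJ n (.lam a)
  | sub {n m s a} : USJ n s m → UJ m a → UJ n (.sub a s)
/-- The judgement `n ⊢ s ▷ m` of λυ′. -/
inductive USJ : ℕ → USb → ℕ → Prop
  | slash {n b} : UJ n b → USJ n (.slash b) (n + 1)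
  | up (n : ℕ) : USJ (n + 1) .up n
  | id (n : ℕ) : USJ (n + 1) .id (n + 1)
  | lift {n m s} : USJ n s m → USJ (n + 1) (.lift s) (m + 1)
end

/-- `⇑ⁿ id`. -/
def liftN : ℕ → USb
  | 0 => .id
  | n + 1 => .lift (liftN n)

/-- Push a substitution one level into a (normal) term. -/
def subst : UTm → USb → UTm
  | .app a b, S => .app (subst a S) (subst b S)
  | .lam a, S => .lam (subst a (.lift S))
  | .one, .slash b => b
  | .one, .id => .one
  | .one, .lift _ => .one
  | .sub a .up, .slash _ => a
  | .sub a .up, .id => .sub a .up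
  | .sub a .up, .lift s => .sub (subst a s) .up
  | N, S => .sub N S

mutual
def norm : UTm → UTm
  | .fvar x => .fvar x
  | .one => .one
  | .app a b => .app (norm a) (norm b)
  | .lam a => .lam (norm a)
  | .sub a s => subst (norm a) (normS s)
def normS : USb → USb
  | .slash b => .slash (norm b)
  | .up => .up
  | .id => .id
  | .lift s => .lift (normS s)
end

open Relation

abbrev RS := ReflTransGen UStep
abbrev RSS := ReflTransGen USStep

theorem rs_appL {a a' b} (h : RS a a') : RS (.app a b) (.app a' b) :=
  h.lift (fun x => UTm.app x b) (fun _ _ => UStep.appL)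
theorem rs_appR {a b b'} (h : RS b b') : RS (.app a b) (.app a b') :=
  h.lift (fun x => UTm.app a x) (fun _ _ => UStep.appR)
theorem rs_lam {a a'} (h : RS a a') : RS (.lam a) (.lam a') :=
  h.lift UTm.lam (fun _ _ => UStep.lamC)
theorem rs_subL {a a' s} (h : RS a a') : RS (.sub a s) (.sub a' s) :=
  h.lift (fun x => UTm.sub x s) (fun _ _ => UStep.subL)
theorem rs_subR {a s s'} (h : RSS s s') : RS (.sub a s) (.sub a s') :=
  h.lift (UTm.sub a) (fun _ _ => UStep.subR)
theorem rss_slash {b b'} (h : RS b b') : RSS (.slash b) (.slash b') :=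
  h.lift USb.slash (fun _ _ => USStep.slash)
theorem rss_lift {s s'} (h : RSS s s') : RSS (.lift s) (.lift s') :=
  h.lift USb.lift (fun _ _ => USStep.lift)

theorem rs_subst : ∀ (N : UTm) (S : USb), RS (.sub N S) (subst N S)
  | .app a b, S => by
    refine .head UStep.app ?_
    exact (rs_appL (rs_subst a S)).trans (rs_appR (rs_subst b S))
  | .lam a, S => .head UStep.lam (rs_lam (rs_subst a (.lift S)))
  | .one, .slash b => .single UStep.var
  | .one, .id => .single UStep.varId
  | .one, .lift _ => .single UStep.varLift
  | .one, .up => .refl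
  | .sub a .up, .slash _ => .single UStep.shift
  | .sub a .up, .id => .single UStep.shiftId
  | .sub a .up, .lift s => .head UStep.shiftLift (rs_subL (rs_subst a s))
  | .sub a .up, .up => .refl
  | .sub a (.slash _), _ => .refl
  | .sub a .id, _ => .refl
  | .sub a (.lift _), _ => .refl
  | .fvar _, _ => .refl

mutual
theorem rs_norm : ∀ a : UTm, RS a (norm a)
  | .fvar _ => .refl
  | .one => .refl
  | .app a b => (rs_appL (rs_norm a)).trans (rs_appR (rs_norm b))
  | .lam a => rs_lam (rs_norm a)
  | .sub a s =>
    ((rs_subL (rs_norm a)).trans (rs_subR (rss_norm s))).trans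
      (rs_subst (norm a) (normS s))
theorem rss_norm : ∀ s : USb, RSS s (normS s)
  | .slash b => rss_slash (rs_norm b)
  | .up => .refl
  | .id => .refl
  | .lift s => rss_lift (rss_norm s)
end

/-- Shape invariant for outputs of `norm` on well-typed terms. -/
inductive Good : UTm → Prop
  | fvar (x : Var) : Good (.fvar x)
  | one : Good .one
  | app {a b} : Good a → Good b → Good (.app a b)
  | lam {a} : Good a → Good (.lam a)
  | subUp {a} : Good a → Good (.sub a .up)

inductive GoodS : USb → Prop
  | slash {b} : Good b → GoodS (.slash b)
  | up : GoodS .up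
  | id : GoodS .id
  | lift {s} : GoodS s → GoodS (.lift s)

theorem subst_good_ty : ∀ (N : UTm), Good N → ∀ (S : USb) (m m' : ℕ),
    UJ m' N → GoodS S → USJ m S m' → Good (subst N S) ∧ UJ m (subst N S)
  | .fvar x, _, S, m, m', hN, hGS, hS => by
    cases hN
    cases hS with
    | up => exact ⟨Good.subUp (Good.fvar x), UJ.sub (USJ.up 0) (UJ.fvar x)⟩
  | .one, _, S, m, m', hN, hGS, hS => by
    cases hN; cases hS
    · exact ⟨(by cases hGS; assumption), by assumption⟩
    · exact ⟨Good.subUp Good.one, UJ.sub (by apply USJ.up) (UJ.one _)⟩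
    · exact ⟨Good.one, UJ.one _⟩
    · exact ⟨Good.one, UJ.one _⟩
  | .app a b, hG, S, m, m', hN, hGS, hS => by
    cases hG with
    | app ha hb =>
      cases hN with
      | app hta htb =>
        obtain ⟨g1, t1⟩ := subst_good_ty a ha S m m' hta hGS hS
        obtain ⟨g2, t2⟩ := subst_good_ty b hb S m m' htb hGS hS
        exact ⟨Good.app g1 g2, UJ.app t1 t2⟩
  | .lam a, hG, S, m, m', hN, hGS, hS => by
    cases hG with
    | lam ha =>
      cases hN with
      | lam hta =>
        obtain ⟨g1, t1⟩ := subst_good_ty a ha (.lift S) (m+1) (m'+1) hta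
          (GoodS.lift hGS) (USJ.lift hS)
        exact ⟨Good.lam g1, UJ.lam t1⟩
  | .sub a s, hG, S, m, m', hN, hGS, hS => by
    cases hG with
    | subUp ha =>
      cases hN with
      | sub hsu hta =>
        cases hsu with
        | up =>
          cases hS with
          | slash hb => exact ⟨ha, hta⟩
          | up =>
            exact ⟨Good.subUp (Good.subUp ha),
              UJ.sub (USJ.up _) (UJ.sub (USJ.up _) hta)⟩
          | id => exact ⟨Good.subUp ha, UJ.sub (USJ.up _) hta⟩
          | lift hs =>
            obtain ⟨g1, t1⟩ := subst_good_ty a ha _ _ _ hta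
              (by cases hGS with | lift h => exact h) hs
            exact ⟨Good.subUp g1, UJ.sub (USJ.up _) t1⟩

mutual
theorem norm_good_ty : ∀ (a : UTm) (m : ℕ), UJ m a → Good (norm a) ∧ UJ m (norm a)
  | .fvar x, m, h => ⟨Good.fvar x, h⟩
  | .one, m, h => ⟨Good.one, h⟩
  | .app a b, m, h => by
    cases h with
    | app ha hb =>
      obtain ⟨g1, t1⟩ := norm_good_ty a m ha
      obtain ⟨g2, t2⟩ := norm_good_ty b m hb
      exact ⟨Good.app g1 g2, UJ.app t1 t2⟩
  | .lam a, m, h => by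
    cases h with
    | lam ha =>
      obtain ⟨g1, t1⟩ := norm_good_ty a (m+1) ha
      exact ⟨Good.lam g1, UJ.lam t1⟩
  | .sub a s, m, h => by
    cases h with
    | sub hs ha =>
      obtain ⟨g1, t1⟩ := norm_good_ty a _ ha
      obtain ⟨g2, t2⟩ := normS_good_ty s _ _ hs
      exact subst_good_ty (norm a) g1 (normS s) _ _ t1 g2 t2
theorem normS_good_ty : ∀ (s : USb) (m m' : ℕ), USJ m s m' →
    GoodS (normS s) ∧ USJ m (normS s) m'
  | .slash b, m, m', h => by
    cases h with
    | slash hb =>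
      obtain ⟨g1, t1⟩ := norm_good_ty b m hb
      exact ⟨GoodS.slash g1, USJ.slash t1⟩
  | .up, m, m', h => ⟨GoodS.up, h⟩
  | .id, m, m', h => ⟨GoodS.id, h⟩
  | .lift s, m, m', h => by
    cases h with
    | lift hs =>
      obtain ⟨g1, t1⟩ := normS_good_ty s _ _ hs
      exact ⟨GoodS.lift g1, USJ.lift t1⟩
end

theorem subst_liftN_eq : ∀ {N : UTm}, Good N → ∀ (n m : ℕ), UJ m N → n + 1 ≤ m →
    subst N (liftN n) = N := by
  intro N hG
  induction hG with
  | fvar x => intro n m h hle; cases h; omega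
  | one =>
    intro n m h hle
    cases n <;> rfl
  | app _ _ iha ihb =>
    intro n m h hle
    cases h with
    | app ha hb =>
      show UTm.app _ _ = _
      rw [iha n m ha hle, ihb n m hb hle]
  | lam _ iha =>
    intro n m h hle
    cases h with
    | lam ha =>
      show UTm.lam (subst _ (.lift (liftN n))) = _
      rw [show USb.lift (liftN n) = liftN (n+1) from rfl, iha (n+1) (m+1) ha (by omega)]
  | subUp _ iha =>
    intro n m h hle
    cases h with
    | sub hs ha =>
      cases hs with
      | up =>
        cases n with
        | zero => rfl
        | succ k =>
          show UTm.sub (subst _ (liftN k)) .up = _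
          rw [iha k _ ha (by omega)]

theorem usj_liftN : ∀ (n m m' : ℕ), USJ m (liftN n) m' → m = m' ∧ n + 1 ≤ m
  | 0, m, m', h => by cases h; omega
  | k+1, m, m', h => by
    cases h with
    | lift hs =>
      obtain ⟨h1, h2⟩ := usj_liftN k _ _ hs
      omega

/-- If `a[⇑ⁿ id]` is well-formed (`n ≥ 0`, in particular `a[id]`), then
`a[⇑ⁿ id]` and `a` have a common υ′-reduct. -/
theorem sub_liftN_id_common_reduct (n : ℕ) (a : UTm)
    (hwf : ∃ m, UJ m (.sub a (liftN n))) :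
    ∃ c : UTm, Relation.ReflTransGen UStep (.sub a (liftN n)) c ∧
      Relation.ReflTransGen UStep a c := by
  obtain ⟨m, hwf⟩ := hwf
  cases hwf with
  | sub hs ha =>
    obtain ⟨heq, hle⟩ := usj_liftN n _ _ hs
    subst heq
    obtain ⟨hG, hT⟩ := norm_good_ty a _ ha
    refine ⟨norm a, ?_, rs_norm a⟩
    have h1 : Relation.ReflTransGen UStep (.sub a (liftN n)) (.sub (norm a) (liftN n)) :=
      rs_subL (rs_norm a)
    have h2 := rs_subst (norm a) (liftN n)
    rw [subst_liftN_eq hG n _ hT hle] at h2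
    exact h1.trans h2
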